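/- Let (X,r) be a finite quantum binomial set with |X| = n. Then the number of D-orbits O in X³ of type (ii), i.e. with O ∩ (((Δ₂ × X) ∪ (X × Δ₂)) \ Δ₃) ≠ ∅, is exactly n(n−1). -/

import Mathlib

/-- The map r¹² = r × id acting on X³ (realized as `X × X × X`). -/
def r12 {X : Type*} (r : X × X → X × X) : X × X × X → X × X × X :=
  fun p => ((r (p.1, p.2.1)).1, (r (p.1, p.2.1)).2, p.2.2)

/-- The map r²³ = id × r acting on X³. -/
def r23 {X : Type*} (r : X × X → X × X) : X × X × X → X × X × X :=
  fun p => (p.1, (r (p.2.1, p.2.2)).1, (r (p.2.1, p.2.2)).2)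

/-- One step of the action of the group D(r) generated by r¹² and r²³. -/
def dStep {X : Type*} (r : X × X → X × X) (a b : X × X × X) : Prop :=
  r12 r a = b ∨ r23 r a = b

/-- `O` is an orbit of the group D(r) = ⟨r¹², r²³⟩ acting on X³. -/
def IsDOrbit {X : Type*} (r : X × X → X × X) (O : Set (X × X × X)) : Prop :=
  ∃ a, O = {b | Relation.EqvGen (dStep r) a b}

/-- `(X,r)` is a quantum binomial set: `r` is involutive, nondegenerate
(left and right actions are bijective) and square-free. -/
def IsQuantumBinomial {X : Type*} (r : X × X → X × X) : Prop :=
  Function.Involutive r ∧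
  (∀ x : X, Function.Bijective (fun y => (r (x, y)).1)) ∧
  (∀ x : X, Function.Bijective (fun y => (r (y, x)).2)) ∧
  (∀ x : X, r (x, x) = (x, x))

/-- The subset Δ₂ × X of X³. -/
def Diag2X {X : Type*} : Set (X × X × X) := {p | p.1 = p.2.1}

/-- The subset X × Δ₂ of X³. -/
def XDiag2 {X : Type*} : Set (X × X × X) := {p | p.2.1 = p.2.2}

/-- The diagonal Δ₃ of X³. -/
def Diag3 {X : Type*} : Set (X × X × X) := {p | p.1 = p.2.1 ∧ p.2.1 = p.2.2}

/-- `(X,r)` is braided: the braid relation r¹²r²³r¹² = r²³r¹²r²³ holds on X³. -/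
def IsBraided {X : Type*} (r : X × X → X × X) : Prop :=
  (r12 r) ∘ (r23 r) ∘ (r12 r) = (r23 r) ∘ (r12 r) ∘ (r23 r)


open Relation Function
set_option linter.unusedSectionVars false

namespace QBAux


variable {α : Type*}

/-- One step of the action of the group generated by two maps. -/
def dstep (s t : α → α) (a b : α) : Prop := s a = b ∨ t a = b

/-- Generator applied at stage `n` of a walk starting at an `s`-fixed point. -/
def gen (s t : α → α) (n : ℕ) : α → α := if n % 2 = 0 then t else s

/-- The alternating walk t, s, t, s, ... from `a`. -/
def walk (s t : α → α) (a : α) : ℕ → α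
  | 0 => a
  | n+1 => gen s t n (walk s t a n)

variable {s t : α → α}

lemma gen_congr {n m : ℕ} (h : n % 2 = m % 2) : gen s t n = gen s t m := by
  unfold gen; rw [h]

lemma gen_invol (hs : Involutive s) (ht : Involutive t) (n : ℕ) :
    Involutive (gen s t n) := by
  unfold gen; split <;> assumption

lemma gen_or (n : ℕ) : gen s t n = s ∨ gen s t n = t := by
  unfold gen; split <;> simp

lemma walk_succ (a : α) (n : ℕ) : walk s t a (n+1) = gen s t n (walk s t a n) := rfl

lemma walk_back (hs : Involutive s) (ht : Involutive t) (a : α) (n : ℕ) :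
    gen s t n (walk s t a (n+1)) = walk s t a n := by
  rw [walk_succ, gen_invol hs ht]

lemma dstep_symm (hs : Involutive s) (ht : Involutive t) :
    Symmetric (dstep s t) := by
  rintro x y (h | h)
  · exact Or.inl (by rw [← h, hs])
  · exact Or.inr (by rw [← h, ht])

lemma dstep_comm : dstep t s = dstep s t := by
  ext a b; exact or_comm

lemma rtg_walk (a : α) (n : ℕ) : ReflTransGen (dstep s t) a (walk s t a n) := by
  induction n with
  | zero => exact .refl
  | succ n ih =>
      refine ih.tail ?_
      rw [walk_succ]
      rcases gen_or (s := s) (t := t) n with h | h <;> rw [h]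
      · exact Or.inl rfl
      · exact Or.inr rfl

/-- Forward propagation of coincidences with equal parity. -/
lemma walk_fwd (a : α) {i j : ℕ} (hp : i % 2 = j % 2)
    (h : walk s t a i = walk s t a j) (k : ℕ) :
    walk s t a (i + k) = walk s t a (j + k) := by
  induction k with
  | zero => simpa using h
  | succ k ih =>
      have : (i + k) % 2 = (j + k) % 2 := by omega
      rw [show i + (k+1) = (i+k)+1 by ring, show j + (k+1) = (j+k)+1 by ring,
        walk_succ, walk_succ, gen_congr this, ih]

/-- Backward propagation down to 0. -/
lemma walk_bwd (hs : Involutive s) (ht : Involutive t) (a : α) :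
    ∀ i j, i ≤ j → i % 2 = j % 2 → walk s t a i = walk s t a j →
      walk s t a 0 = walk s t a (j - i) := by
  intro i
  induction i with
  | zero => intro j _ _ h; simpa using h
  | succ i ih =>
      intro j hij hp h
      obtain ⟨jm, rfl⟩ : ∃ jm, j = jm + 1 := ⟨j - 1, by omega⟩
      have hgen : gen s t i = gen s t jm := gen_congr (by omega)
      have h' : walk s t a i = walk s t a jm := by
        rw [← walk_back hs ht a i, h, hgen, walk_back hs ht]
      have := ih jm (by omega) (by omega) h'
      simpa [Nat.succ_sub_succ] using this

/-- Shrinking an odd-gap coincidence to a consecutive coincidence. -/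
lemma walk_odd (hs : Involutive s) (ht : Involutive t) (a : α) :
    ∀ d i, walk s t a i = walk s t a (i + 2*d + 1) →
      ∃ n, i ≤ n ∧ n < i + 2*d + 1 ∧ walk s t a (n+1) = walk s t a n := by
  intro d
  induction d with
  | zero =>
      intro i h
      exact ⟨i, le_refl i, by omega, by simpa using h.symm⟩
  | succ d ih =>
      intro i h
      have h1 : walk s t a (i+1) = walk s t a (i + 2*d + 2) := by
        rw [walk_succ, h, show i + 2*(d+1) + 1 = (i + 2*d + 2) + 1 by ring,
          walk_succ, gen_congr (show (i + 2*d + 2) % 2 = i % 2 by omega),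
          gen_invol hs ht]
      obtain ⟨n, h2, h3, h4⟩ := ih (i+1) (by rw [h1]; congr 1; ring)
      exact ⟨n, by omega, by omega, h4⟩

variable [Finite α]

lemma exists_consec (hs : Involutive s) (ht : Involutive t) {a : α} (ha : s a = a) :
    ∃ n, walk s t a (n+1) = walk s t a n := by
  obtain ⟨i, j, hij, h⟩ := Finite.exists_ne_map_eq_of_infinite (walk s t a)
  wlog hlt : i < j generalizing i j
  · exact this j i hij.symm h.symm (by omega)
  rcases eq_or_ne (i % 2) (j % 2) with hp | hp
  · have h0 := walk_bwd hs ht a i j hlt.le hp h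
    obtain ⟨d, hd⟩ : ∃ d, j - i = 2*d + 2 := ⟨(j - i - 2)/2, by omega⟩
    refine ⟨2*d + 1, ?_⟩
    have h1 : walk s t a (2*d + 2) = a := by rw [← hd, ← h0]; rfl
    have h2 : walk s t a (2*d + 1) = a := by
      have : gen s t (2*d+1) (walk s t a (2*d + 2)) = walk s t a (2*d+1) :=
        walk_back hs ht a (2*d+1)
      rw [h1] at this
      rw [← this]
      unfold gen
      rw [show (2*d+1) % 2 = 1 from by omega]
      simpa using ha
    rw [show 2*d+1+1 = 2*d+2 by ring, h1, h2]
  · obtain ⟨d, hd⟩ : ∃ d, j = i + 2*d + 1 := ⟨(j - i - 1)/2, by omega⟩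
    obtain ⟨n, _, _, hn⟩ := walk_odd hs ht a d i (by rw [← hd]; exact h)
    exact ⟨n, hn⟩


lemma gen_even {n : ℕ} (h : n % 2 = 0) : gen s t n = t := by simp [gen, h]
lemma gen_odd {n : ℕ} (h : n % 2 = 1) : gen s t n = s := by simp [gen, h]

/-- A point fixed by exactly one of the generators. -/
def Endp (s t : α → α) (c : α) : Prop :=
  (s c = c ∨ t c = c) ∧ ¬(s c = c ∧ t c = c)




lemma rtg_range (hs : Involutive s) (ht : Involutive t) {a : α} (ha : s a = a)
    {c : α} (h : ReflTransGen (dstep s t) a c) : ∃ n, c = walk s t a n := by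
  induction h with
  | refl => exact ⟨0, rfl⟩
  | tail h1 h2 ih =>
      obtain ⟨n, rfl⟩ := ih
      rcases h2 with h2 | h2
      · rcases Nat.mod_two_eq_zero_or_one n with he | ho
        · rcases Nat.eq_zero_or_pos n with rfl | hn
          · exact ⟨0, by simpa [walk, ha] using h2.symm⟩
          · obtain ⟨m, rfl⟩ : ∃ m, n = m + 1 := ⟨n - 1, by omega⟩
            refine ⟨m, ?_⟩
            have := walk_back hs ht a m
            rw [gen_odd (by omega : m % 2 = 1)] at this
            rw [← h2, this]
        · refine ⟨n+1, ?_⟩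
          rw [walk_succ, gen_odd (by omega : n % 2 = 1), h2]
      · rcases Nat.mod_two_eq_zero_or_one n with he | ho
        · refine ⟨n+1, ?_⟩
          rw [walk_succ, gen_even (by omega : n % 2 = 0), h2]
        · obtain ⟨m, rfl⟩ : ∃ m, n = m + 1 := ⟨n - 1, by omega⟩
          refine ⟨m, ?_⟩
          have := walk_back hs ht a m
          rw [gen_even (by omega : m % 2 = 0)] at this
          rw [← h2, this]

theorem pair_main [Finite α] (hs : Involutive s) (ht : Involutive t) {a : α}
    (ha1 : s a = a) (ha2 : t a ≠ a) :
    ∃ b, b ≠ a ∧ ReflTransGen (dstep s t) a b ∧ Endp s t b ∧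
      ∀ c, ReflTransGen (dstep s t) a c → Endp s t c → c = a ∨ c = b := by
  classical
  set w := walk s t a with hw
  obtain H := exists_consec hs ht ha1
  set n₀ := Nat.find H with hn₀def
  have hn₀ : w (n₀ + 1) = w n₀ := Nat.find_spec H
  have hmin : ∀ m, m < n₀ → w (m+1) ≠ w m := fun m hm => Nat.find_min H hm
  have hw1 : w 1 = t a := by rw [hw, walk_succ, gen_even (by omega : 0 % 2 = 0)]; rfl
  have hn₀pos : 0 < n₀ := by
    rcases Nat.eq_zero_or_pos n₀ with h0 | h; swap
    · exact h
    exfalso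
    apply ha2
    have := hn₀
    rw [h0] at this
    rw [← hw1, this]; rfl
  obtain ⟨b, hb⟩ : ∃ b, b = w n₀ := ⟨_, rfl⟩
  -- b is fixed by gen n₀
  have hbfix : gen s t n₀ b = b := by
    have h := walk_back hs ht a n₀
    rw [← hw] at h
    rw [hn₀] at h
    rw [hb]; exact h
  -- b is not fixed by both
  have hbnotboth : ¬ (s b = b ∧ t b = b) := by
    rintro ⟨hsb, htb⟩
    obtain ⟨k, hk⟩ : ∃ k, n₀ = k + 1 := ⟨n₀ - 1, by omega⟩
    have hgk : gen s t k b = b := by rcases gen_or (s := s) (t := t) k with h | h <;> rw [h] <;> assumption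
    have hback : gen s t k (w n₀) = w k := by
      have := walk_back hs ht a k; rw [← hw] at this; rw [hk]; exact this
    have hwk : w k = b := by
      rw [hb] at hgk
      rw [← hback, hgk, ← hb]
    exact hmin k (by omega) (by rw [← hk, hwk, hb])
  have hbend : Endp s t b := by
    refine ⟨?_, hbnotboth⟩
    rcases gen_or (s := s) (t := t) n₀ with h | h
    · exact Or.inl (by rw [← h, hbfix])
    · exact Or.inr (by rw [← h, hbfix])
  have hba : b ≠ a := by
    intro hcontra
    rcases Nat.mod_two_eq_zero_or_one n₀ with he | ho
    · apply ha2
      have := hbfix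
      rw [gen_even (by omega : n₀ % 2 = 0), hcontra] at this
      exact this
    · obtain ⟨d, hd⟩ : ∃ d, n₀ = 2*d + 1 := ⟨(n₀-1)/2, by omega⟩
      have h0 : w 0 = w (0 + 2*d + 1) := by
        rw [show (0 + 2*d + 1) = n₀ from by omega, ← hb, hcontra]
        rw [hw]
        rfl
      obtain ⟨n, _, hlt, hcons⟩ := walk_odd hs ht a d 0 h0
      exact hmin n (by omega) hcons
  -- reflection
  have hrefl : ∀ k, k ≤ n₀ → w (n₀ + 1 + k) = w (n₀ - k) := by
    intro k
    induction k with
    | zero => intro _; simpa using hn₀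
    | succ k ih =>
        intro hk
        have h1 := ih (by omega)
        have h3 : gen s t (n₀ - (k+1)) (w (n₀ - k)) = w (n₀ - (k+1)) := by
          have := walk_back hs ht a (n₀ - (k+1))
          rw [← hw] at this
          rwa [show n₀ - (k+1) + 1 = n₀ - k from by omega] at this
        have hg : gen s t (n₀ + 1 + k) = gen s t (n₀ - (k+1)) := gen_congr (by omega)
        calc w (n₀ + 1 + (k+1)) = gen s t (n₀+1+k) (w (n₀+1+k)) := by
              rw [show n₀+1+(k+1) = (n₀+1+k)+1 from rfl]; rfl
          _ = gen s t (n₀ - (k+1)) (w (n₀ - k)) := by rw [hg, h1]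
          _ = w (n₀ - (k+1)) := h3
  -- periodicity
  have hper1 : w (2*n₀ + 2) = w 0 := by
    have h1 : w (2*n₀ + 1) = w 0 := by
      have := hrefl n₀ le_rfl
      rwa [show n₀ + 1 + n₀ = 2*n₀ + 1 from by omega, Nat.sub_self] at this
    have : w (2*n₀ + 2) = gen s t (2*n₀+1) (w (2*n₀+1)) := rfl
    rw [this, h1, gen_odd (by omega : (2*n₀+1) % 2 = 1)]
    show s a = a
    exact ha1
  have hper : ∀ q m, w (m + q*(2*n₀+2)) = w m := by
    intro q
    induction q with
    | zero => intro m; simp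
    | succ q ih =>
        intro m
        have h1 : w (m + q*(2*n₀+2) + (2*n₀+2)) = w (m + q*(2*n₀+2)) := by
          have := walk_fwd a (by omega : (2*n₀+2) % 2 = 0 % 2) hper1 (m + q*(2*n₀+2))
          rw [← hw] at this
          rw [show m + q*(2*n₀+2) + (2*n₀+2) = 2*n₀+2 + (m + q*(2*n₀+2)) from by ring, this]
          simp
        rw [show m + (q+1)*(2*n₀+2) = m + q*(2*n₀+2) + (2*n₀+2) from by ring, h1, ih]
  have hred : ∀ m, ∃ m', m' ≤ n₀ ∧ w m = w m' := by
    intro m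
    set p := 2*n₀ + 2 with hp
    have hmod : w m = w (m % p) := by
      have := hper (m / p) (m % p)
      rwa [Nat.mod_add_div' m p] at this
    rcases le_or_gt (m % p) n₀ with h | h
    · exact ⟨m % p, h, hmod⟩
    · have hlt : m % p < p := Nat.mod_lt m (by omega)
      set k := m % p - (n₀ + 1) with hk
      have : w (n₀ + 1 + k) = w (n₀ - k) := hrefl k (by omega)
      refine ⟨n₀ - k, by omega, ?_⟩
      rw [hmod, show m % p = n₀ + 1 + k from by omega, this]
  -- uniqueness
  refine ⟨b, hba, by rw [hb, hw]; exact rtg_walk a n₀, hbend, ?_⟩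
  intro c hc hcend
  obtain ⟨m, rfl⟩ := rtg_range hs ht ha1 hc
  obtain ⟨m', hm', heq⟩ := hred m
  have hcend' : Endp s t (w m') := by rw [← heq]; exact hcend
  rw [← hw]
  rw [heq]
  rcases Nat.mod_two_eq_zero_or_one m' with he | ho
  · rcases hcend'.1 with hfix | hfix
    · -- s c = c, other generator; m' even
      rcases Nat.eq_zero_or_pos m' with rfl | hpos
      · exact Or.inl rfl
      · exfalso
        obtain ⟨k, rfl⟩ : ∃ k, m' = k + 1 := ⟨m' - 1, by omega⟩
        have hback : gen s t k (w (k+1)) = w k := by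
          have := walk_back hs ht a k; rw [← hw] at this; exact this
        rw [gen_odd (by omega : k % 2 = 1), hfix] at hback
        exact hmin k (by omega) (by rw [hback])
    · -- t c = c with m' even : consecutive equality at m'
      have : w (m' + 1) = w m' := by
        rw [hw, walk_succ, ← hw, gen_even (by omega : m' % 2 = 0), hfix]
      have hge : n₀ ≤ m' := by
        by_contra hlt
        exact hmin m' (by omega) this
      have hmn : m' = n₀ := le_antisymm hm' hge
      exact Or.inr (by rw [hmn, hb])
  · rcases hcend'.1 with hfix | hfix
    · -- s c = c with m' odd : consecutive equality at m'
      have : w (m' + 1) = w m' := by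
        rw [hw, walk_succ, ← hw, gen_odd (by omega : m' % 2 = 1), hfix]
      have hge : n₀ ≤ m' := by
        by_contra hlt
        exact hmin m' (by omega) this
      have hmn : m' = n₀ := le_antisymm hm' hge
      exact Or.inr (by rw [hmn, hb])
    · -- t c = c, m' odd
      exfalso
      obtain ⟨k, rfl⟩ : ∃ k, m' = k + 1 := ⟨m' - 1, by omega⟩
      have hback : gen s t k (w (k+1)) = w k := by
        have := walk_back hs ht a k; rw [← hw] at this; exact this
      rw [gen_even (by omega : k % 2 = 0), hfix] at hback
      exact hmin k (by omega) (by rw [hback])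


end QBAux


namespace QBAux
variable {α : Type*} {s t : α → α}

lemma endp_comm {c : α} : Endp t s c ↔ Endp s t c := by
  unfold Endp; tauto

theorem endpoint_pair [Finite α] (hs : Involutive s) (ht : Involutive t) {a : α}
    (ha : Endp s t a) :
    ∃ b, b ≠ a ∧ ReflTransGen (dstep s t) a b ∧ Endp s t b ∧
      ∀ c, ReflTransGen (dstep s t) a c → Endp s t c → c = a ∨ c = b := by
  rcases ha.1 with h | h
  · exact pair_main hs ht h (fun ht2 => ha.2 ⟨h, ht2⟩)
  · have h2 : s a ≠ a := fun hs2 => ha.2 ⟨hs2, h⟩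
    obtain ⟨b, h1, h2', h3, h4⟩ := pair_main ht hs h h2
    rw [dstep_comm] at h2'
    refine ⟨b, h1, h2', endp_comm.mp h3, ?_⟩
    intro c hc hcend
    exact h4 c (by rw [dstep_comm]; exact hc) (endp_comm.mpr hcend)

lemma eqvGen_iff_rtg (hs : Involutive s) (ht : Involutive t) {a b : α} :
    EqvGen (dstep s t) a b ↔ ReflTransGen (dstep s t) a b := by
  constructor
  · intro h
    induction h with
    | rel x y h => exact .single h
    | refl x => exact .refl
    | symm x y h ih => exact @Std.Symm.symm _ _ (@ReflTransGen.stdSymm _ _ ⟨fun a b h => dstep_symm hs ht h⟩) _ _ ih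
    | trans x y z h1 h2 ih1 ih2 => exact ih1.trans ih2
  · intro h
    induction h with
    | refl => exact .refl a
    | tail h1 h2 ih => exact Relation.EqvGen.trans _ _ _ ih (Relation.EqvGen.rel _ _ h2)

end QBAux

theorem card_typeII_orbits {X : Type*} [Fintype X]
    (r : X × X → X × X) (hqb : IsQuantumBinomial r) :
    {O : Set (X × X × X) | IsDOrbit r O ∧
        (O ∩ ((Diag2X ∪ XDiag2) \ Diag3)).Nonempty}.ncard
      = Fintype.card X * (Fintype.card X - 1) := by
  classical
  obtain ⟨hinv, hlam, hrho, hsq⟩ := hqb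
  have hr2 : ∀ q, r (r q) = q := hinv
  have hs : Function.Involutive (r12 r) := by
    rintro ⟨x, y, z⟩
    simp [r12, hr2]
  have ht : Function.Involutive (r23 r) := by
    rintro ⟨x, y, z⟩
    simp [r23, hr2]
  have hsfix : ∀ p : X × X × X, r12 r p = p ↔ p.1 = p.2.1 := by
    rintro ⟨x, y, z⟩
    simp only [r12]
    constructor
    · intro h
      have h1 : (r (x, y)).1 = x := congrArg Prod.fst h
      have hx : (r (x, x)).1 = x := by rw [hsq x]
      have := (hlam x).1 (a₁ := y) (a₂ := x)
        (show (r (x, y)).1 = (r (x, x)).1 by rw [h1, hx])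
      exact this.symm
    · intro h
      subst h
      simp [hsq x]
  have htfix : ∀ p : X × X × X, r23 r p = p ↔ p.2.1 = p.2.2 := by
    rintro ⟨x, y, z⟩
    simp only [r23]
    constructor
    · intro h
      have h2 : (r (y, z)).2 = z := congrArg (fun q => q.2.2) h
      have hz : (r (z, z)).2 = z := by rw [hsq z]
      exact (hrho z).1 (a₁ := y) (a₂ := z)
        (show (r (y, z)).2 = (r (z, z)).2 by rw [h2, hz])
    · intro h
      subst h
      simp [hsq y]
  set Sset : Set (X × X × X) := (Diag2X ∪ XDiag2) \ Diag3 with hSdef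
  have hds : dStep r = QBAux.dstep (r12 r) (r23 r) := rfl
  have hSE : ∀ p, p ∈ Sset ↔ QBAux.Endp (r12 r) (r23 r) p := by
    intro p
    have h1 : p ∈ Diag2X ↔ r12 r p = p := (hsfix p).symm
    have h2 : p ∈ XDiag2 ↔ r23 r p = p := (htfix p).symm
    constructor
    · rintro ⟨hu, hn⟩
      refine ⟨?_, fun ⟨hfs, hft⟩ => hn ⟨h1.mpr hfs, h2.mpr hft⟩⟩
      rcases hu with hu | hu
      · exact Or.inl (h1.mp hu)
      · exact Or.inr (h2.mp hu)
    · rintro ⟨hu, hn⟩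
      refine ⟨?_, fun hd => hn ⟨h1.mp hd.1, h2.mp hd.2⟩⟩
      rcases hu with hu | hu
      · exact Or.inl (h1.mpr hu)
      · exact Or.inr (h2.mpr hu)
  set orb : (X × X × X) → Set (X × X × X) :=
    fun a => {b | Relation.EqvGen (dStep r) a b} with horbdef
  have horbeq : ∀ a c, Relation.EqvGen (dStep r) a c → orb a = orb c := by
    intro a c h
    ext d
    constructor
    · intro hd
      exact Relation.EqvGen.trans _ _ _ (Relation.EqvGen.symm _ _ h) hd
    · intro hd
      exact Relation.EqvGen.trans _ _ _ h hd
  have hmemorb : ∀ a, a ∈ orb a := fun a => Relation.EqvGen.refl a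
  have hE : ∀ a c, Relation.EqvGen (dStep r) a c ↔
      Relation.ReflTransGen (QBAux.dstep (r12 r) (r23 r)) a c := by
    intro a c
    rw [hds]
    exact QBAux.eqvGen_iff_rtg hs ht
  set T : Set (Set (X × X × X)) :=
    {O | IsDOrbit r O ∧ (O ∩ Sset).Nonempty} with hTdef
  have hSfin : Sset.Finite := Set.toFinite _
  have hTfin : T.Finite := Set.toFinite _
  have hmaps : ∀ a ∈ hSfin.toFinset, orb a ∈ hTfin.toFinset := by
    intro a ha
    rw [Set.Finite.mem_toFinset] at ha ⊢
    exact ⟨⟨a, rfl⟩, ⟨a, hmemorb a, ha⟩⟩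
  have hcard := Finset.card_eq_sum_card_fiberwise hmaps
  have hfib : ∀ O ∈ hTfin.toFinset,
      (hSfin.toFinset.filter (fun a => orb a = O)).card = 2 := by
    intro O hO
    rw [Set.Finite.mem_toFinset] at hO
    obtain ⟨⟨a₀, hOdef⟩, ⟨c, hcO, hcS⟩⟩ := hO
    have hcorb : orb c = O := by
      rw [hOdef] at hcO
      rw [hOdef]
      exact (horbeq a₀ c hcO).symm
    have hcend : QBAux.Endp (r12 r) (r23 r) c := (hSE c).mp hcS
    obtain ⟨b, hbne, hbr, hbend, huniq⟩ := QBAux.endpoint_pair hs ht hcend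
    have hfilter : hSfin.toFinset.filter (fun a => orb a = O) = {c, b} := by
      ext d
      simp only [Finset.mem_filter, Finset.mem_insert, Finset.mem_singleton,
        Set.Finite.mem_toFinset]
      constructor
      · rintro ⟨hdS, hdO⟩
        have hcd : Relation.EqvGen (dStep r) c d := by
          have : c ∈ orb d := by rw [hdO, ← hcorb]; exact hmemorb c
          exact Relation.EqvGen.symm _ _ this
        exact huniq d ((hE c d).mp hcd) ((hSE d).mp hdS)
      · rintro (rfl | rfl)
        · exact ⟨hcS, hcorb⟩
        · refine ⟨(hSE d).mpr hbend, ?_⟩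
          rw [← hcorb]
          exact (horbeq c d ((hE c d).mpr hbr)).symm
    rw [hfilter]
    exact Finset.card_pair (fun h => hbne h.symm)
  have hsum : hSfin.toFinset.card = 2 * hTfin.toFinset.card := by
    rw [hcard, Finset.sum_congr rfl hfib, Finset.sum_const, smul_eq_mul, Nat.mul_comm]
  set n := Fintype.card X with hn
  -- cardinality of Sset
  have hoffinj1 : Function.Injective (fun q : X × X => (q.1, q.1, q.2)) := by
    rintro ⟨a1, a2⟩ ⟨b1, b2⟩ h
    simp only [Prod.mk.injEq] at h
    simp [Prod.mk.injEq, h.1, h.2.2]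
  have hoffinj2 : Function.Injective (fun q : X × X => (q.1, q.2, q.2)) := by
    rintro ⟨a1, a2⟩ ⟨b1, b2⟩ h
    simp only [Prod.mk.injEq] at h
    simp [Prod.mk.injEq, h.1, h.2.1]
  have hAB : Sset = (fun q : X × X => (q.1, q.1, q.2)) '' {q : X × X | q.1 ≠ q.2} ∪
      (fun q : X × X => (q.1, q.2, q.2)) '' {q : X × X | q.1 ≠ q.2} := by
    rw [hSdef]
    ext ⟨x, y, z⟩
    simp only [Set.mem_diff, Set.mem_union, Set.mem_image, Set.mem_setOf_eq,
      Diag2X, Diag3, XDiag2, Prod.mk.injEq]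
    constructor
    · rintro ⟨h | h, hn⟩
      · refine Or.inl ⟨(x, z), fun he => hn ⟨h, by rw [← h]; exact he⟩, rfl, h, rfl⟩
      · refine Or.inr ⟨(x, y), fun he => hn ⟨he, h⟩, rfl, rfl, h⟩
    · rintro (⟨⟨u, v⟩, huv, h1, h2, h3⟩ | ⟨⟨u, v⟩, huv, h1, h2, h3⟩)
      · subst h1; subst h2; subst h3
        exact ⟨Or.inl rfl, fun hd => huv hd.2⟩
      · subst h1; subst h2; subst h3
        exact ⟨Or.inr rfl, fun hd => huv hd.1⟩
  have hdisj : Disjoint ((fun q : X × X => (q.1, q.1, q.2)) '' {q : X × X | q.1 ≠ q.2})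
      ((fun q : X × X => (q.1, q.2, q.2)) '' {q : X × X | q.1 ≠ q.2}) := by
    rw [Set.disjoint_left]
    rintro p ⟨⟨u, v⟩, huv, rfl⟩ ⟨⟨u', v'⟩, huv', heq⟩
    simp only [Prod.mk.injEq] at heq
    exact huv (heq.2.1.symm.trans heq.2.2)
  have hoffcard : {q : X × X | q.1 ≠ q.2}.ncard = n * n - n := by
    have hinjd : Function.Injective (fun x : X => (x, x)) :=
      fun a b h => by simpa using congrArg Prod.fst h
    have hdiag : (Set.diagonal X).ncard = n := by
      rw [← Set.range_diag, ← Set.image_univ,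
        Set.ncard_image_of_injective (f := Function.diag) _ hinjd, Set.ncard_univ, Nat.card_eq_fintype_card]
    have hcompl : {q : X × X | q.1 ≠ q.2} = (Set.diagonal X)ᶜ := by
      ext q
      simp [Set.diagonal]
    have hsum2 := Set.ncard_add_ncard_compl (Set.diagonal X)
    rw [hdiag, Nat.card_prod, Nat.card_eq_fintype_card] at hsum2
    rw [hcompl, ← hsum2, Nat.add_sub_cancel_left]
  have hScard : hSfin.toFinset.card = 2 * (n * n - n) := by
    rw [← Set.ncard_eq_toFinset_card Sset hSfin, hAB,
      Set.ncard_union_eq hdisj (Set.toFinite _) (Set.toFinite _),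
      Set.ncard_image_of_injective _ hoffinj1, Set.ncard_image_of_injective _ hoffinj2,
      hoffcard]
    ring
  have hTcard : hTfin.toFinset.card = n * n - n := by
    have := hsum
    rw [hScard] at this
    omega
  have hTn : T.ncard = hTfin.toFinset.card := Set.ncard_eq_toFinset_card T hTfin
  rw [hTn, hTcard]
  have hns : n * n = n * (n - 1) + n := by
    rcases n with _ | k
    · simp
    · rw [Nat.succ_sub_one]
      ring
  rw [hns, Nat.add_sub_cancel]
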